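/- arXiv:math/0505433 — 2 statements merged into one kernel-verified Lean document; each statement's English description precedes it below -/
import Mathlib

section
/- Every nonzero formal power series f(X) ∈ ℤ_p[[X]] can be written uniquely in the form f(X) = p^μ · g(X) · u(X), where μ is a non-negative integer, g(X) is a distinguished polynomial, and u(X) is a unit of the ring ℤ_p[[X]]. -/
/-- A polynomial `g` over `ℤ_p` is *distinguished* if it is monic and all of its
coefficients except the leading one are divisible by `p`. -/
def IsDistinguished (p : ℕ) [Fact p.Prime] (g : Polynomial ℤ_[p]) : Prop :=
  g.Monic ∧ ∀ i < g.natDegree, (p : ℤ_[p]) ∣ g.coeff i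

open PowerSeries Filter Finset

namespace WPrep

variable {p : ℕ} [Fact p.Prime]

lemma not_isUnit_p : ¬ IsUnit (p : ℤ_[p]) := by
  rw [PadicInt.isUnit_iff, PadicInt.norm_p]
  have : (1:ℝ) < (p:ℝ) := by exact_mod_cast (Fact.out : p.Prime).one_lt
  intro h
  rw [inv_eq_one] at h
  linarith

lemma isUnit_of_not_dvd {x : ℤ_[p]} (h : ¬ (p:ℤ_[p]) ∣ x) : IsUnit x := by
  by_contra hx
  exact h ((PadicInt.norm_lt_one_iff_dvd x).1 (PadicInt.not_isUnit_iff.1 hx))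

lemma not_dvd_of_isUnit {x : ℤ_[p]} (h : IsUnit x) : ¬ (p:ℤ_[p]) ∣ x :=
  fun hd => not_isUnit_p (isUnit_of_dvd_unit hd h)

lemma isUnit_of_one_sub_dvd {x : ℤ_[p]} (h : (p:ℤ_[p]) ∣ 1 - x) : IsUnit x := by
  by_contra hx
  have hpx : (p:ℤ_[p]) ∣ x :=
    (PadicInt.norm_lt_one_iff_dvd x).1 (PadicInt.not_isUnit_iff.1 hx)
  have : (p:ℤ_[p]) ∣ 1 := by
    have := dvd_add h hpx
    simpa using this
  exact not_isUnit_p (isUnit_of_dvd_one this)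

lemma norm_le_of_pow_dvd {x : ℤ_[p]} {k : ℕ} (h : (p:ℤ_[p])^k ∣ x) :
    ‖x‖ ≤ ((p:ℝ)⁻¹)^k := by
  have := (PadicInt.norm_le_pow_iff_mem_span_pow x k).2
    (by rwa [Ideal.mem_span_singleton])
  calc ‖x‖ ≤ (p:ℝ)^(-(k:ℤ)) := this
  _ = ((p:ℝ)⁻¹)^k := by rw [zpow_neg, zpow_natCast, inv_pow]

lemma eq_zero_of_forall_pow_dvd {x : ℤ_[p]} (h : ∀ k, (p:ℤ_[p])^k ∣ x) : x = 0 := by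
  have hp1 : (1:ℝ) < (p:ℝ) := by exact_mod_cast (Fact.out : p.Prime).one_lt
  have h0 : Tendsto (fun k : ℕ => ((p:ℝ)⁻¹)^k) atTop (nhds 0) := by
    apply tendsto_pow_atTop_nhds_zero_of_lt_one
    · positivity
    · rw [inv_lt_one_iff₀]; right; exact hp1
  have : ‖x‖ ≤ 0 := ge_of_tendsto h0 (Filter.Eventually.of_forall fun k => norm_le_of_pow_dvd (h k))
  simpa using le_antisymm this (norm_nonneg x)

/-- drop the first `n` coefficients -/
noncomputable def shift (n : ℕ) (s : PowerSeries ℤ_[p]) : PowerSeries ℤ_[p] :=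
  PowerSeries.mk fun i => PowerSeries.coeff (i + n) s

@[simp] lemma coeff_shift (n i : ℕ) (s : PowerSeries ℤ_[p]) :
    PowerSeries.coeff i (shift n s) = PowerSeries.coeff (i + n) s :=
  coeff_mk _ _

lemma shift_sub (n : ℕ) (a b : PowerSeries ℤ_[p]) :
    shift n (a - b) = shift n a - shift n b := by
  ext i; simp

lemma shift_X_pow_mul (n : ℕ) (a : PowerSeries ℤ_[p]) :
    shift n (X ^ n * a) = a := by
  ext i; simp [coeff_X_pow_mul]

lemma self_eq_trunc_add_shift (n : ℕ) (f : PowerSeries ℤ_[p]) :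
    f = (↑(trunc n f) : PowerSeries ℤ_[p]) + X ^ n * shift n f := by
  ext i
  by_cases hi : i < n
  · have : ¬ n ≤ i := by omega
    simp [Polynomial.coeff_coe, coeff_trunc, hi, coeff_X_pow_mul', this]
  · push_neg at hi
    have h1 : i = (i - n) + n := by omega
    rw [h1, map_add, coeff_X_pow_mul]
    simp [Polynomial.coeff_coe, coeff_trunc, show ¬ (i - n + n < n) by omega]

lemma dvd_coeff_mul_left {c : ℤ_[p]} {a : PowerSeries ℤ_[p]}
    (ha : ∀ i, c ∣ PowerSeries.coeff i a) (b : PowerSeries ℤ_[p]) (i : ℕ) :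
    c ∣ PowerSeries.coeff i (a * b) := by
  rw [coeff_mul]
  exact Finset.dvd_sum fun x _ => Dvd.dvd.mul_right (ha x.1) _

lemma dvd_coeff_mul_right {c : ℤ_[p]} {a : PowerSeries ℤ_[p]}
    (ha : ∀ i, c ∣ PowerSeries.coeff i a) (b : PowerSeries ℤ_[p]) (i : ℕ) :
    c ∣ PowerSeries.coeff i (b * a) := by
  rw [mul_comm]; exact dvd_coeff_mul_left ha b i

section Division

variable (n : ℕ) (f : PowerSeries ℤ_[p])

/-- Weierstrass division, existence. -/
lemma wdiv_exists (hfi : ∀ i < n, (p:ℤ_[p]) ∣ PowerSeries.coeff i f)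
    (hfn : IsUnit (PowerSeries.coeff n f)) (h : PowerSeries ℤ_[p]) :
    ∃ q r : PowerSeries ℤ_[p], (∀ i, n ≤ i → PowerSeries.coeff i r = 0) ∧ h = q * f + r := by
  set U := shift n f with hUdef
  have hUu : IsUnit U := by
    rw [PowerSeries.isUnit_iff_constantCoeff]
    have hc : constantCoeff (R := ℤ_[p]) U = PowerSeries.coeff n f := by
      rw [← coeff_zero_eq_constantCoeff, hUdef, coeff_shift, zero_add]
    rw [hc]; exact hfn
  obtain ⟨u, hu⟩ := hUu
  set V := ((u⁻¹ : (PowerSeries ℤ_[p])ˣ) : PowerSeries ℤ_[p]) with hVdef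
  have hVU : V * U = 1 := by rw [hVdef, ← hu]; exact_mod_cast u.inv_mul
  set α := (↑(trunc n f) : PowerSeries ℤ_[p]) with hαdef
  have hαdvd : ∀ i, (p:ℤ_[p]) ∣ PowerSeries.coeff i α := by
    intro i
    rw [hαdef, Polynomial.coeff_coe, coeff_trunc]
    split
    · exact hfi i ‹_›
    · simp
  have hfdec : f = α + X ^ n * U := self_eq_trunc_add_shift n f
  set T : PowerSeries ℤ_[p] → PowerSeries ℤ_[p] :=
    fun s => V * (shift n h - shift n (s * α)) with hT
  set qs : ℕ → PowerSeries ℤ_[p] := fun m => T^[m] 0 with hqs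
  have hqs_succ : ∀ m, qs (m+1) = T (qs m) := by
    intro m; rw [hqs]; simp [Function.iterate_succ_apply']
  have hTdiff : ∀ s1 s2, T s1 - T s2 = V * shift n ((s2 - s1) * α) := by
    intro s1 s2
    have e1 : (s2 - s1) * α = s2 * α - s1 * α := sub_mul _ _ _
    rw [hT]
    simp only
    rw [e1, shift_sub]
    ring
  have hdiff : ∀ m i, (p:ℤ_[p])^m ∣ PowerSeries.coeff i (qs (m+1) - qs m) := by
    intro m
    induction m with
    | zero => intro i; simp
    | succ m ih =>
      intro i
      have hstep : qs (m+2) - qs (m+1) = V * shift n ((qs m - qs (m+1)) * α) := by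
        rw [hqs_succ (m+1), hqs_succ m]
        exact hTdiff _ _
      have h1 : ∀ j, (p:ℤ_[p])^(m+1) ∣ PowerSeries.coeff j ((qs m - qs (m+1)) * α) := by
        intro j
        rw [coeff_mul]
        refine Finset.dvd_sum fun x _ => ?_
        rw [pow_succ]
        refine mul_dvd_mul ?_ (hαdvd x.2)
        have h0 : PowerSeries.coeff x.1 (qs m - qs (m+1))
            = -(PowerSeries.coeff x.1 (qs (m+1) - qs m)) := by
          rw [map_sub, map_sub]; exact (neg_sub _ _).symm
        rw [h0]
        exact dvd_neg.2 (ih x.1)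
      have h2 : ∀ j, (p:ℤ_[p])^(m+1) ∣ PowerSeries.coeff j
          (shift n ((qs m - qs (m+1)) * α)) := by
        intro j; rw [coeff_shift]; exact h1 _
      rw [hstep]
      exact dvd_coeff_mul_right h2 V i
  have hcau : ∀ i, CauchySeq (fun m => PowerSeries.coeff i (qs m)) := by
    intro i
    apply cauchySeq_of_le_geometric ((p:ℝ)⁻¹) 1 ?_ ?_
    · rw [inv_lt_one_iff₀]; right; exact_mod_cast (Fact.out : p.Prime).one_lt
    · intro m
      rw [dist_eq_norm]
      have h0 : PowerSeries.coeff i (qs m) - PowerSeries.coeff i (qs (m+1))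
          = -(PowerSeries.coeff i (qs (m+1) - qs m)) := by
        rw [map_sub]; exact (neg_sub _ _).symm
      rw [h0, norm_neg, one_mul]
      exact norm_le_of_pow_dvd (hdiff m i)
  set Q : PowerSeries ℤ_[p] := PowerSeries.mk
    (fun i => limUnder atTop (fun m => PowerSeries.coeff i (qs m))) with hQdef
  have hQt : ∀ i, Tendsto (fun m => PowerSeries.coeff i (qs m)) atTop
      (nhds (PowerSeries.coeff i Q)) := by
    intro i
    rw [hQdef, coeff_mk]
    exact (hcau i).tendsto_limUnder
  have hmulα : ∀ i, Tendsto (fun m => PowerSeries.coeff i (qs m * α)) atTop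
      (nhds (PowerSeries.coeff i (Q * α))) := by
    intro i
    simp only [coeff_mul]
    exact tendsto_finset_sum _ fun x _ => (hQt x.1).mul_const _
  have hTc : ∀ i, Tendsto (fun m => PowerSeries.coeff i (T (qs m))) atTop
      (nhds (PowerSeries.coeff i (T Q))) := by
    intro i
    rw [hT]
    simp only [coeff_mul, map_sub, coeff_shift]
    refine tendsto_finset_sum _ fun x _ => ?_
    have hm := hmulα (x.2 + n)
    simp only [coeff_mul] at hm
    exact Tendsto.const_mul _ ((tendsto_const_nhds).sub hm)
  have hfix : Q = T Q := by
    ext i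
    have h1 : Tendsto (fun m => PowerSeries.coeff i (qs (m+1))) atTop
        (nhds (PowerSeries.coeff i Q)) := (hQt i).comp (tendsto_add_atTop_nat 1)
    have h2 : Tendsto (fun m => PowerSeries.coeff i (qs (m+1))) atTop
        (nhds (PowerSeries.coeff i (T Q))) := by
      simpa only [hqs_succ] using hTc i
    exact tendsto_nhds_unique h1 h2
  refine ⟨Q, h - Q * f, fun i hi => ?_, by ring⟩
  have hQU : Q * U = shift n h - shift n (Q * α) := by
    have h4 : U * (V * (shift n h - shift n (Q * α))) = shift n h - shift n (Q * α) := by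
      rw [← mul_assoc, mul_comm U V, hVU, one_mul]
    calc Q * U = U * Q := mul_comm _ _
    _ = U * (T Q) := by rw [← hfix]
    _ = _ := h4
  have hshift0 : shift n (h - Q * f) = 0 := by
    have hQf : Q * f = Q * α + X ^ n * (Q * U) := by
      rw [hfdec]; ring
    have h5 : shift n (Q * α + X ^ n * (Q * U)) = shift n (Q * α) + Q * U := by
      ext j; simp [coeff_shift, map_add, coeff_X_pow_mul]
    rw [shift_sub, hQf, h5, hQU]
    ring
  have h6 : PowerSeries.coeff (i - n) (shift n (h - Q * f)) = 0 := by
    rw [hshift0]; simp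
  rw [coeff_shift, show i - n + n = i by omega] at h6
  exact h6

/-- Weierstrass division, uniqueness (homogeneous form). -/
lemma wdiv_unique (hfi : ∀ i < n, (p:ℤ_[p]) ∣ PowerSeries.coeff i f)
    (hfn : IsUnit (PowerSeries.coeff n f)) {q r : PowerSeries ℤ_[p]}
    (hr : ∀ i, n ≤ i → PowerSeries.coeff i r = 0)
    (heq : q * f + r = 0) : q = 0 ∧ r = 0 := by
  have key : ∀ k i, (p:ℤ_[p])^k ∣ PowerSeries.coeff i q := by
    intro k
    induction k with
    | zero => intro i; simp
    | succ k ih =>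
      intro i
      induction i using Nat.strong_induction_on with
      | _ i IH =>
        have hc : PowerSeries.coeff (n + i) (q * f) = 0 := by
          have := congrArg (PowerSeries.coeff (n+i)) heq
          simpa [hr (n+i) (by omega)] using this
        rw [coeff_mul] at hc
        have hmem : (i, n) ∈ antidiagonal (n + i) := by
          simp [Nat.add_comm]
        rw [← Finset.add_sum_erase _ _ hmem] at hc
        have hrest : (p:ℤ_[p])^(k+1) ∣ ∑ x ∈ (antidiagonal (n+i)).erase (i, n),
            PowerSeries.coeff x.1 q * PowerSeries.coeff x.2 f := by
          refine Finset.dvd_sum fun x hx => ?_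
          obtain ⟨hne, hx⟩ := Finset.mem_erase.1 hx
          rw [Finset.HasAntidiagonal.mem_antidiagonal] at hx
          by_cases hb : x.2 < n
          · rw [pow_succ]
            exact mul_dvd_mul (ih x.1) (hfi x.2 hb)
          · push_neg at hb
            have hx2 : n < x.2 := by
              rcases lt_or_eq_of_le hb with h' | h'
              · exact h'
              · exfalso; apply hne
                have : x.1 = i := by omega
                exact Prod.ext this h'.symm
            have hx1 : x.1 < i := by omega
            exact Dvd.dvd.mul_right (IH x.1 hx1) _
        have hqf : (p:ℤ_[p])^(k+1) ∣ PowerSeries.coeff i q * PowerSeries.coeff n f := by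
          have h2 := eq_neg_of_add_eq_zero_left hc
          rw [h2]
          exact dvd_neg.2 hrest
        have hu : (PowerSeries.coeff n f) * ((hfn.unit⁻¹ : ℤ_[p]ˣ) : ℤ_[p]) = 1 := by
          have h3 := hfn.unit.mul_inv
          rwa [IsUnit.unit_spec] at h3
        have hqi : PowerSeries.coeff i q
            = (PowerSeries.coeff i q * PowerSeries.coeff n f)
              * ((hfn.unit⁻¹ : ℤ_[p]ˣ) : ℤ_[p]) := by
          rw [mul_assoc, hu, mul_one]
        rw [hqi]
        exact Dvd.dvd.mul_right hqf _
  have hq : q = 0 := by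
    ext i
    simpa using eq_zero_of_forall_pow_dvd (fun k => key k i)
  refine ⟨hq, ?_⟩
  rw [hq] at heq
  simpa using heq

end Division


section Preparation

/-- existence of preparation for series not divisible by p -/
lemma prep_exists (f : PowerSeries ℤ_[p])
    (hex : ∃ i, ¬ (p:ℤ_[p]) ∣ PowerSeries.coeff i f) :
    ∃ (g : Polynomial ℤ_[p]) (v : (PowerSeries ℤ_[p])ˣ),
      (g.Monic ∧ ∀ i < g.natDegree, (p : ℤ_[p]) ∣ g.coeff i) ∧
      f = (↑g : PowerSeries ℤ_[p]) * ↑v := by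
  classical
  set n := Nat.find hex with hn
  have hnu : ¬ (p:ℤ_[p]) ∣ PowerSeries.coeff n f := Nat.find_spec hex
  have hless : ∀ i < n, (p:ℤ_[p]) ∣ PowerSeries.coeff i f := fun i hi =>
    of_not_not (Nat.find_min hex hi)
  have hfn : IsUnit (PowerSeries.coeff n f) := isUnit_of_not_dvd hnu
  obtain ⟨q, r, hr, hX⟩ := wdiv_exists n f hless hfn (X ^ n)
  -- all coefficients of r are divisible by p
  have hrdvd : ∀ j, (p:ℤ_[p]) ∣ PowerSeries.coeff j r := by
    intro j
    by_cases hj : n ≤ j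
    · rw [hr j hj]; exact dvd_zero _
    · push_neg at hj
      have h0 : PowerSeries.coeff j (X ^ n : PowerSeries ℤ_[p]) = 0 := by
        rw [coeff_X_pow]; simp [Nat.ne_of_lt hj]
      have h1 := congrArg (PowerSeries.coeff j) hX
      rw [h0, map_add] at h1
      have h2 : (p:ℤ_[p]) ∣ PowerSeries.coeff j (q * f) := by
        rw [coeff_mul]
        refine Finset.dvd_sum fun x hxm => ?_
        rw [Finset.HasAntidiagonal.mem_antidiagonal] at hxm
        exact Dvd.dvd.mul_left (hless x.2 (by omega)) _
      have h3 : PowerSeries.coeff j r = -(PowerSeries.coeff j (q * f)) := by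
        linear_combination -h1
      rw [h3]
      exact dvd_neg.2 h2
  -- q is a unit
  have hqu : IsUnit q := by
    rw [PowerSeries.isUnit_iff_constantCoeff]
    have h1 := congrArg (PowerSeries.coeff n) hX
    rw [map_add, hr n le_rfl, add_zero, coeff_X_pow] at h1
    rw [if_pos rfl] at h1
    rw [coeff_mul] at h1
    have hmem : ((0:ℕ), n) ∈ antidiagonal n := by simp
    rw [← Finset.add_sum_erase _ _ hmem] at h1
    have hrest : (p:ℤ_[p]) ∣ ∑ x ∈ (antidiagonal n).erase (0, n),
        PowerSeries.coeff x.1 q * PowerSeries.coeff x.2 f := by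
      refine Finset.dvd_sum fun x hx => ?_
      obtain ⟨hne, hxm⟩ := Finset.mem_erase.1 hx
      rw [Finset.HasAntidiagonal.mem_antidiagonal] at hxm
      have hx2 : x.2 < n := by
        rcases Nat.lt_or_ge x.2 n with h' | h'
        · exact h'
        · exfalso; apply hne
          have h2 : x.2 = n := by omega
          have h3 : x.1 = 0 := by omega
          exact Prod.ext h3 h2
      exact Dvd.dvd.mul_left (hless x.2 hx2) _
    have hone : (p:ℤ_[p]) ∣ 1 - PowerSeries.coeff 0 q * PowerSeries.coeff n f := by
      have h2 : (1:ℤ_[p]) - PowerSeries.coeff 0 q * PowerSeries.coeff n f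
          = ∑ x ∈ (antidiagonal n).erase (0, n),
            PowerSeries.coeff x.1 q * PowerSeries.coeff x.2 f := by
        linear_combination h1
      rw [h2]; exact hrest
    have := isUnit_of_one_sub_dvd hone
    have h4 : IsUnit (PowerSeries.coeff 0 q) := isUnit_of_mul_isUnit_left this
    rwa [← coeff_zero_eq_constantCoeff]
  -- the distinguished polynomial
  set gp : Polynomial ℤ_[p] := Polynomial.X ^ n - trunc n r with hgp
  have htr : ((trunc n r : Polynomial ℤ_[p]) : PowerSeries ℤ_[p]) = r := by
    ext i
    rw [Polynomial.coeff_coe, coeff_trunc]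
    split
    · rfl
    · rw [eq_comm]; exact hr i (by omega)
  have hgcoe : (↑gp : PowerSeries ℤ_[p]) = X ^ n - r := by
    rw [hgp, Polynomial.coe_sub, Polynomial.coe_pow, Polynomial.coe_X, htr]
  have hdeglt : (trunc n r).degree < (Polynomial.X ^ n : Polynomial ℤ_[p]).degree := by
    rw [Polynomial.degree_X_pow]
    exact degree_trunc_lt r n
  have hdeg : gp.degree = n := by
    rw [hgp, Polynomial.degree_sub_eq_left_of_degree_lt hdeglt, Polynomial.degree_X_pow]
  have hnatdeg : gp.natDegree = n := Polynomial.natDegree_eq_of_degree_eq_some hdeg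
  have hmonic : gp.Monic := by
    rw [hgp]
    exact Polynomial.monic_X_pow_sub (by rw [← Polynomial.degree_X_pow (R := ℤ_[p]) n]; exact hdeglt)
  have hdist : ∀ i < gp.natDegree, (p : ℤ_[p]) ∣ gp.coeff i := by
    intro i hi
    rw [hnatdeg] at hi
    rw [hgp]
    simp only [Polynomial.coeff_sub, Polynomial.coeff_X_pow, if_neg (Nat.ne_of_lt hi)]
    rw [coeff_trunc, if_pos hi, zero_sub]
    exact dvd_neg.2 (hrdvd i)
  obtain ⟨uq, huq⟩ := hqu
  refine ⟨gp, uq⁻¹, ⟨hmonic, hdist⟩, ?_⟩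
  have hgq : (↑gp : PowerSeries ℤ_[p]) = q * f := by
    rw [hgcoe, hX]; ring
  have hfinal : (↑(uq⁻¹) : PowerSeries ℤ_[p]) * ↑gp = f := by
    rw [hgq, ← huq, ← mul_assoc]
    simp
  rw [← hfinal]; ring

end Preparation


section Uniqueness

lemma coeff_not_dvd (g : Polynomial ℤ_[p]) (hm : g.Monic)
    (hgi : ∀ i < g.natDegree, (p:ℤ_[p]) ∣ g.coeff i) (v : (PowerSeries ℤ_[p])ˣ) :
    ¬ (p:ℤ_[p]) ∣ PowerSeries.coeff g.natDegree
      ((↑g : PowerSeries ℤ_[p]) * ↑v) := by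
  intro hdvd
  set d := g.natDegree with hd
  rw [coeff_mul] at hdvd
  have hmem : (d, 0) ∈ antidiagonal d := by simp
  rw [← Finset.add_sum_erase _ _ hmem] at hdvd
  have hrest : (p:ℤ_[p]) ∣ ∑ x ∈ (antidiagonal d).erase (d, 0),
      PowerSeries.coeff x.1 (↑g : PowerSeries ℤ_[p])
       * PowerSeries.coeff x.2 (↑v : PowerSeries ℤ_[p]) := by
    refine Finset.dvd_sum fun x hx => ?_
    obtain ⟨hne, hxm⟩ := Finset.mem_erase.1 hx
    rw [Finset.HasAntidiagonal.mem_antidiagonal] at hxm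
    have hx1 : x.1 < d := by
      rcases Nat.lt_or_ge x.1 d with h' | h'
      · exact h'
      · exfalso; exact hne (Prod.ext (by omega) (by omega))
    refine Dvd.dvd.mul_right ?_ _
    rw [Polynomial.coeff_coe]
    exact hgi x.1 hx1
  have hterm : (p:ℤ_[p]) ∣ PowerSeries.coeff (d, 0).1 (↑g : PowerSeries ℤ_[p])
      * PowerSeries.coeff (d, 0).2 (↑v : PowerSeries ℤ_[p]) := by
    have h5 := dvd_sub hdvd hrest
    simpa using h5
  have hcd : PowerSeries.coeff (d, 0).1 (↑g : PowerSeries ℤ_[p]) = 1 := by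
    rw [Polynomial.coeff_coe]
    exact hm.coeff_natDegree
  rw [hcd, one_mul] at hterm
  have hvu : IsUnit (PowerSeries.coeff (d, 0).2 (↑v : PowerSeries ℤ_[p])) := by
    rw [coeff_zero_eq_constantCoeff]
    exact PowerSeries.isUnit_iff_constantCoeff.1 v.isUnit
  exact not_dvd_of_isUnit hvu hterm

lemma pps_ne_zero : (p : PowerSeries ℤ_[p]) ≠ 0 := by
  have h1 : (p:ℤ_[p]) ≠ 0 := Nat.cast_ne_zero.2 (Fact.out : p.Prime).ne_zero
  intro h
  apply h1
  have := congrArg (PowerSeries.constantCoeff (R := ℤ_[p])) h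
  simpa using this

lemma mu_unique_aux {a b : ℕ} (g g' : Polynomial ℤ_[p]) (u u' : (PowerSeries ℤ_[p])ˣ)
    (hm : g.Monic) (hgi : ∀ i < g.natDegree, (p:ℤ_[p]) ∣ g.coeff i)
    (heq : (p : PowerSeries ℤ_[p])^a * ↑g * ↑u = (p : PowerSeries ℤ_[p])^b * ↑g' * ↑u')
    (hab : a ≤ b) : a = b := by
  by_contra hne
  have hlt : a < b := lt_of_le_of_ne hab hne
  have hb : b = a + ((b - a - 1) + 1) := by omega
  rw [hb, pow_add] at heq
  have hpane : (p : PowerSeries ℤ_[p])^a ≠ 0 := pow_ne_zero _ pps_ne_zero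
  have hcancel : (↑g : PowerSeries ℤ_[p]) * ↑u
      = (p : PowerSeries ℤ_[p])^((b - a - 1) + 1) * (↑g' * ↑u') := by
    apply mul_left_cancel₀ hpane
    rw [← mul_assoc, heq]; ring
  have hdvd : (p:ℤ_[p]) ∣ PowerSeries.coeff g.natDegree
      ((↑g : PowerSeries ℤ_[p]) * ↑u) := by
    rw [hcancel, pow_succ']
    have hcp : (p : PowerSeries ℤ_[p]) = C (R := ℤ_[p]) (p:ℤ_[p]) := (map_natCast (C (R := ℤ_[p])) p).symm
    rw [mul_assoc, hcp, coeff_C_mul]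
    exact Dvd.intro _ rfl
  exact coeff_not_dvd g hm hgi u hdvd

set_option maxHeartbeats 2000000 in
lemma prep_unique (g g' : Polynomial ℤ_[p]) (u u' : (PowerSeries ℤ_[p])ˣ)
    (hm : g.Monic) (hgi : ∀ i < g.natDegree, (p:ℤ_[p]) ∣ g.coeff i)
    (hm' : g'.Monic) (hgi' : ∀ i < g'.natDegree, (p:ℤ_[p]) ∣ g'.coeff i)
    (heq : (↑g : PowerSeries ℤ_[p]) * ↑u = (↑g' : PowerSeries ℤ_[p]) * ↑u') :
    g = g' ∧ u = u' := by
  set d := g.natDegree with hd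
  have hfi : ∀ i < d, (p:ℤ_[p]) ∣ PowerSeries.coeff i (↑g : PowerSeries ℤ_[p]) := by
    intro i hi
    rw [Polynomial.coeff_coe]; exact hgi i hi
  have hfn : IsUnit (PowerSeries.coeff d (↑g : PowerSeries ℤ_[p])) := by
    rw [Polynomial.coeff_coe]
    rw [show g.coeff d = 1 from hm.coeff_natDegree]
    exact isUnit_one
  set Q := g' /ₘ g with hQ
  set Rr := g' %ₘ g with hRr
  have hdiv : Rr + g * Q = g' := Polynomial.modByMonic_add_div g' g
  have hdegR : Rr.degree < g.degree := Polynomial.degree_modByMonic_lt g' hm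
  have hrcond : ∀ i, d ≤ i → PowerSeries.coeff i (↑Rr : PowerSeries ℤ_[p]) = 0 := by
    intro i hi
    rw [Polynomial.coeff_coe]
    apply Polynomial.coeff_eq_zero_of_degree_lt
    calc Rr.degree < g.degree := hdegR
    _ = (d : WithBot ℕ) := Polynomial.degree_eq_natDegree hm.ne_zero
    _ ≤ (i : WithBot ℕ) := by exact_mod_cast hi
  have hcoe1 : (↑g' : PowerSeries ℤ_[p]) = ↑Q * ↑g + ↑Rr := by
    rw [← hdiv]
    push_cast [Polynomial.coe_add, Polynomial.coe_mul]
    ring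
  have hcoe2 : (↑g' : PowerSeries ℤ_[p]) = ((↑u : PowerSeries ℤ_[p]) * ↑u'⁻¹) * ↑g := by
    have h2 : (↑g' : PowerSeries ℤ_[p]) * ((↑u' : PowerSeries ℤ_[p]) * ↑u'⁻¹)
        = ((↑u : PowerSeries ℤ_[p]) * ↑u'⁻¹) * ↑g := by
      rw [← mul_assoc, ← heq]; ring
    rwa [Units.mul_inv, mul_one] at h2
  have hzero : ((↑Q : PowerSeries ℤ_[p]) - (↑u : PowerSeries ℤ_[p]) * ↑u'⁻¹)
      * (↑g : PowerSeries ℤ_[p]) + ↑Rr = 0 := by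
    linear_combination hcoe2 - hcoe1
  obtain ⟨hq0, hr0⟩ := wdiv_unique d (↑g) hfi hfn hrcond hzero
  have hQu : (↑Q : PowerSeries ℤ_[p]) = (↑u : PowerSeries ℤ_[p]) * ↑u'⁻¹ :=
    sub_eq_zero.1 hq0
  have hR0 : Rr = 0 := by
    rwa [Polynomial.coe_eq_zero_iff] at hr0
  have hg' : g' = g * Q := by
    rw [← hdiv, hR0, zero_add]
  have hQne : Q ≠ 0 := by
    intro h0; rw [h0, mul_zero] at hg'; exact hm'.ne_zero hg'
  have hQm : Q.Monic := by
    have hl := congrArg Polynomial.leadingCoeff hg'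
    rw [Polynomial.leadingCoeff_mul, hm'.leadingCoeff, hm.leadingCoeff, one_mul] at hl
    exact hl.symm
  have hndeg : g'.natDegree = d + Q.natDegree := by
    rw [hg', Polynomial.natDegree_mul hm.ne_zero hQne]
  have hQcoef : ∀ j, j < Q.natDegree → (p:ℤ_[p]) ∣ Q.coeff j := by
    intro j hj
    have hdj : d + j < g'.natDegree := by omega
    have hdvdg' : (p:ℤ_[p]) ∣ g'.coeff (d + j) := hgi' _ hdj
    have hcm : g'.coeff (d + j)
        = ∑ x ∈ antidiagonal (d + j), g.coeff x.1 * Q.coeff x.2 := by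
      rw [hg', Polynomial.coeff_mul]
    have hmem : (d, j) ∈ antidiagonal (d + j) := by simp
    rw [← Finset.add_sum_erase _ _ hmem] at hcm
    have hrest : (p:ℤ_[p]) ∣ ∑ x ∈ (antidiagonal (d+j)).erase (d, j),
        g.coeff x.1 * Q.coeff x.2 := by
      refine Finset.dvd_sum fun x hx => ?_
      obtain ⟨hne, hxm⟩ := Finset.mem_erase.1 hx
      rw [Finset.HasAntidiagonal.mem_antidiagonal] at hxm
      rcases Nat.lt_or_ge x.1 d with h' | h'
      · exact Dvd.dvd.mul_right (hgi x.1 h') _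
      · rcases Nat.lt_or_ge d x.1 with h'' | h''
        · rw [Polynomial.coeff_eq_zero_of_natDegree_lt h'', zero_mul]
          exact dvd_zero _
        · exfalso; exact hne (Prod.ext (by omega) (by omega))
    have hterm : (p:ℤ_[p]) ∣ g.coeff (d, j).1 * Q.coeff (d, j).2 := by
      have h5 : g.coeff (d,j).1 * Q.coeff (d,j).2
          = g'.coeff (d+j) - ∑ x ∈ (antidiagonal (d+j)).erase (d, j),
            g.coeff x.1 * Q.coeff x.2 := by
        linear_combination -hcm
      rw [h5]
      exact dvd_sub hdvdg' hrest
    rw [show g.coeff (d,j).1 = 1 from hm.coeff_natDegree, one_mul] at hterm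
    exact hterm
  have hQdeg0 : Q.natDegree = 0 := by
    by_contra h0
    have hj : 0 < Q.natDegree := Nat.pos_of_ne_zero h0
    have h1 := hQcoef 0 hj
    have hunit : IsUnit (Q.coeff 0) := by
      have h2 : IsUnit (↑Q : PowerSeries ℤ_[p]) := by
        rw [hQu, ← Units.val_mul]
        exact Units.isUnit _
      have h3 := PowerSeries.isUnit_iff_constantCoeff.1 h2
      have h4 : Q.coeff 0 = PowerSeries.constantCoeff (R := ℤ_[p]) (↑Q : PowerSeries ℤ_[p]) := by
        rw [← coeff_zero_eq_constantCoeff]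
        exact (Polynomial.coeff_coe Q 0).symm
      rw [h4]; exact h3
    exact not_dvd_of_isUnit hunit h1
  have hQ1 : Q = 1 := hQm.natDegree_eq_zero.1 hQdeg0
  have hgg : g = g' := by rw [hg', hQ1, mul_one]
  refine ⟨hgg, ?_⟩
  have hgne : (↑g : PowerSeries ℤ_[p]) ≠ 0 :=
    fun h => hm.ne_zero (by rwa [Polynomial.coe_eq_zero_iff] at h)
  have h6 : (↑g : PowerSeries ℤ_[p]) * ↑u = ↑g * ↑u' := by rw [heq, hgg]
  exact Units.ext (mul_left_cancel₀ hgne h6)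

end Uniqueness

end WPrep

/-- **p-adic Weierstrass preparation theorem.**  Every nonzero formal power series
`f(X) ∈ ℤ_p[[X]]` can be written uniquely as `f = p^μ · g(X) · u(X)` with `μ` a
non-negative integer, `g` a distinguished polynomial and `u` a unit of `ℤ_p[[X]]`. -/
theorem padic_weierstrass_preparation (p : ℕ) [Fact p.Prime]
    (f : PowerSeries ℤ_[p]) (hf : f ≠ 0) :
    ∃! w : ℕ × Polynomial ℤ_[p] × (PowerSeries ℤ_[p])ˣ,
      IsDistinguished p w.2.1 ∧
        f = (p : PowerSeries ℤ_[p]) ^ w.1 * (w.2.1 : PowerSeries ℤ_[p]) *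
          (w.2.2 : PowerSeries ℤ_[p]) := by
  classical
  obtain ⟨i0, hi0⟩ : ∃ i, PowerSeries.coeff i f ≠ 0 := by
    by_contra hcon
    push_neg at hcon
    exact hf (PowerSeries.ext fun i => by simp [hcon i])
  obtain ⟨K, hK⟩ : ∃ K, ¬ (p:ℤ_[p])^K ∣ PowerSeries.coeff i0 f := by
    by_contra hcon
    push_neg at hcon
    exact hi0 (WPrep.eq_zero_of_forall_pow_dvd hcon)
  set P : ℕ → Prop := fun k => ∀ i, (p:ℤ_[p])^k ∣ PowerSeries.coeff i f with hP
  have hP0 : P 0 := fun i => one_dvd _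
  have hPbound : ∀ k, P k → k < K := by
    intro k hk
    by_contra hlt
    push_neg at hlt
    exact hK (dvd_trans (pow_dvd_pow _ hlt) (hk i0))
  set μ := Nat.findGreatest P K with hμ
  have hPμ : P μ := Nat.findGreatest_spec (Nat.zero_le K) hP0
  have hPμ1 : ¬ P (μ + 1) := fun hPs =>
    Nat.findGreatest_is_greatest (Nat.lt_succ_self μ) (le_of_lt (hPbound _ hPs)) hPs
  choose dcoef hd using hPμ
  set f1 : PowerSeries ℤ_[p] := PowerSeries.mk dcoef with hf1
  have hcp : (p : PowerSeries ℤ_[p]) = PowerSeries.C (R := ℤ_[p]) (p:ℤ_[p]) :=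
    (map_natCast (PowerSeries.C (R := ℤ_[p])) p).symm
  have hcoeffpk : ∀ (k:ℕ) (s : PowerSeries ℤ_[p]) (i : ℕ),
      PowerSeries.coeff i ((p : PowerSeries ℤ_[p])^k * s)
        = (p:ℤ_[p])^k * PowerSeries.coeff i s := by
    intro k s i
    rw [hcp, ← map_pow, PowerSeries.coeff_C_mul]
  have hff1 : f = (p : PowerSeries ℤ_[p])^μ * f1 := by
    ext i
    rw [hcoeffpk, hf1, PowerSeries.coeff_mk]
    exact hd i
  have hex : ∃ i, ¬ (p:ℤ_[p]) ∣ PowerSeries.coeff i f1 := by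
    by_contra hcon
    push_neg at hcon
    apply hPμ1
    intro i
    have h1 : (p:ℤ_[p]) ∣ dcoef i := by simpa [hf1] using hcon i
    obtain ⟨e, he⟩ := h1
    refine ⟨e, ?_⟩
    rw [hd i, he, pow_succ, mul_assoc]
  obtain ⟨g, v, ⟨hgm, hgd⟩, hgv⟩ := WPrep.prep_exists f1 hex
  refine ⟨(μ, g, v), ⟨⟨hgm, hgd⟩, ?_⟩, ?_⟩
  · rw [hff1, hgv]; ring
  · rintro ⟨μ', g', v'⟩ ⟨hdist', heq'⟩
    obtain ⟨hm', hd'⟩ := hdist'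
    simp only at hm' hd' heq' ⊢
    have hmain : (p : PowerSeries ℤ_[p])^μ' * (↑g' : PowerSeries ℤ_[p]) * ↑v'
        = (p : PowerSeries ℤ_[p])^μ * (↑g : PowerSeries ℤ_[p]) * ↑v := by
      rw [← heq', hff1, hgv]; ring
    have hμeq : μ' = μ := by
      rcases le_total μ' μ with hle | hle
      · exact WPrep.mu_unique_aux g' g v' v hm' hd' hmain hle
      · exact (WPrep.mu_unique_aux g g' v v' hgm hgd hmain.symm hle).symm
    have hgu : (↑g' : PowerSeries ℤ_[p]) * ↑v' = (↑g : PowerSeries ℤ_[p]) * ↑v := by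
      have hpane : (p : PowerSeries ℤ_[p])^μ ≠ 0 := pow_ne_zero _ WPrep.pps_ne_zero
      apply mul_left_cancel₀ hpane
      calc (p : PowerSeries ℤ_[p])^μ * ((↑g' : PowerSeries ℤ_[p]) * ↑v')
          = (p : PowerSeries ℤ_[p])^μ' * (↑g' : PowerSeries ℤ_[p]) * ↑v' := by
            rw [hμeq]; ring
      _ = (p : PowerSeries ℤ_[p])^μ * (↑g : PowerSeries ℤ_[p]) * ↑v := hmain
      _ = (p : PowerSeries ℤ_[p])^μ * ((↑g : PowerSeries ℤ_[p]) * ↑v) := by ring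
    obtain ⟨hgg, hvv⟩ := WPrep.prep_unique g' g v' v hm' hd' hgm hgd hgu
    exact Prod.ext hμeq (Prod.ext hgg hvv)
end

section
/- Let g(X) ∈ ℤ_p[X] be a distinguished polynomial of degree λ such that g(ζ − 1) ≠ 0 for every p-power root of unity ζ ≠ 1. Then there is an integer C, independent of m, such that for all sufficiently large m one has ord_p( ∏_{ζ^{p^m} = 1, ζ ≠ 1} g(ζ − 1) ) = λ·m + C, where the product runs over all p^m-th roots of unity ζ ≠ 1 in the field ℚ_p(ζ_{p^m}) obtained by adjoining a primitive p^m-th root of unity to ℚ_p. -/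
/-- The additive `p`-adic valuation `ord_p` on a (finite) normed extension `K` of `ℚ_p`,
normalized so that `ord_p p = 1`; it is given by `ord_p x = - log_p ‖x‖`. -/
noncomputable def ordp (p : ℕ) {K : Type*} [NormedField K] (x : K) : ℝ :=
  -Real.logb p ‖x‖

/-- Evaluation of a polynomial `g ∈ ℤ_p[X]` at an element of a normed extension field of `ℚ_p`. -/
noncomputable def Polynomial.evalPadic (p : ℕ) [Fact p.Prime] {K : Type*}
    [NormedField K] [NormedAlgebra ℚ_[p] K] (g : Polynomial ℤ_[p]) (x : K) : K :=
  Polynomial.eval x (g.map ((algebraMap ℚ_[p] K).comp (PadicInt.Coe.ringHom)))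

namespace IwasawaProofAux

open Polynomial IntermediateField Finset

variable {p : ℕ} [Fact p.Prime]


open Polynomial IntermediateField Finset

variable {p : ℕ} [Fact p.Prime]

theorem p_one_lt : (1:ℝ) < (p:ℝ) := by exact_mod_cast (Fact.out : p.Prime).one_lt

theorem p_pos : (0:ℝ) < (p:ℝ) := lt_trans one_pos p_one_lt

theorem p_inv_pos : (0:ℝ) < (p:ℝ)⁻¹ := inv_pos.2 p_pos

theorem p_inv_lt_one : (p:ℝ)⁻¹ < 1 := by
  rw [← one_div]
  exact (div_lt_one (p_pos)).2 p_one_lt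

theorem pow_inj_nonneg {a b : ℝ} (ha : 0 ≤ a) (hb : 0 ≤ b) {n : ℕ} (hn : n ≠ 0)
    (h : a ^ n = b ^ n) : a = b := by
  rcases lt_trichotomy a b with hab|hab|hab
  · exact absurd h (pow_lt_pow_left₀ hab ha hn).ne
  · exact hab
  · exact absurd h.symm (pow_lt_pow_left₀ hab hb hn).ne

theorem norm_add_eq_right {K : Type*} [NormedField K] [IsUltrametricDist K] {x y : K}
    (h : ‖x‖ < ‖y‖) : ‖x + y‖ = ‖y‖ := by
  rw [IsUltrametricDist.norm_add_eq_max_of_norm_ne_norm h.ne, max_eq_right h.le]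

theorem exists_norm_sum_eq {K : Type*} [NormedField K] [IsUltrametricDist K]
    {ι : Type*} {s : Finset ι} (hs : s.Nonempty) (f : ι → K)
    (h : ∀ i ∈ s, ∀ j ∈ s, i ≠ j → ‖f i‖ ≠ ‖f j‖) :
    ∃ i ∈ s, ‖∑ j ∈ s, f j‖ = ‖f i‖ := by
  induction hs using Finset.Nonempty.cons_induction with
  | singleton j => exact ⟨j, by simp, by simp⟩
  | cons a t ha ht IH =>
      obtain ⟨i, hi, hnorm⟩ := IH
        (fun i hi j hj hij => h i (mem_cons_of_mem hi) j (mem_cons_of_mem hj) hij)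
      rw [Finset.sum_cons]
      have hne : ‖f a‖ ≠ ‖∑ j ∈ t, f j‖ := by
        rw [hnorm]
        exact h a (mem_cons_self a t) i (mem_cons_of_mem hi) (fun e => ha (e ▸ hi))
      rcases max_cases ‖f a‖ ‖∑ j ∈ t, f j‖ with ⟨he, _⟩|⟨he, _⟩ <;>
        rw [IsUltrametricDist.norm_add_eq_max_of_norm_ne_norm hne, he]
      · exact ⟨a, mem_cons_self a t, rfl⟩
      · exact ⟨i, mem_cons_of_mem hi, hnorm⟩

theorem evalPadic_eq_aeval {K : Type*} [NormedField K] [NormedAlgebra ℚ_[p] K]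
    (g : Polynomial ℤ_[p]) (x : K) :
    Polynomial.evalPadic p g x = aeval x (g.map PadicInt.Coe.ringHom) := by
  rw [Polynomial.evalPadic, ← Polynomial.map_map, Polynomial.eval_map, ← Polynomial.aeval_def]

theorem coeff_norm_le {g : Polynomial ℤ_[p]} (hg : IsDistinguished p g) {i : ℕ}
    (hi : i < g.natDegree) :
    ‖(g.map (PadicInt.Coe.ringHom (p := p))).coeff i‖ ≤ (p:ℝ)⁻¹ := by
  obtain ⟨b, hb⟩ := hg.2 i hi
  rw [coeff_map, hb]
  rw [show ((PadicInt.Coe.ringHom (p := p)) ((p:ℤ_[p]) * b)) = ((p:ℤ_[p]) * b : ℤ_[p]) from rfl,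
    PadicInt.padic_norm_e_of_padicInt, norm_mul, PadicInt.norm_p]
  exact mul_le_of_le_one_right (inv_nonneg.2 p_pos.le) (PadicInt.norm_le_one b)

theorem aeval_monic_split {K : Type*} [NormedField K] [NormedAlgebra ℚ_[p] K]
    {g : Polynomial ℤ_[p]} (hm : g.Monic) (x : K) :
    aeval x (g.map (PadicInt.Coe.ringHom (p := p)))
      = (∑ i ∈ Finset.range g.natDegree, (g.map (PadicInt.Coe.ringHom (p := p))).coeff i • x ^ i)
        + x ^ g.natDegree := by
  have hG : (g.map (PadicInt.Coe.ringHom (p := p))).Monic := hm.map _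
  have hnd : (g.map (PadicInt.Coe.ringHom (p := p))).natDegree = g.natDegree :=
    hm.natDegree_map _
  rw [aeval_eq_sum_range, hnd, Finset.sum_range_succ]
  congr 1
  rw [← hnd, hG.coeff_natDegree, one_smul]

theorem eisenstein_root_norm {K : Type*} [NormedField K] [NormedAlgebra ℚ_[p] K]
    {E : Polynomial ℤ_[p]} (hm : E.Monic) (hd1 : 1 ≤ E.natDegree)
    (hco : ∀ i < E.natDegree, (p:ℤ_[p]) ∣ E.coeff i)
    (h0 : ‖E.coeff 0‖ = (p:ℝ)⁻¹) {π : K}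
    (hroot : aeval π (E.map (PadicInt.Coe.ringHom (p := p))) = 0) :
    ‖π‖ ^ E.natDegree = (p:ℝ)⁻¹ := by
  haveI : IsUltrametricDist K := IsUltrametricDist.of_normedAlgebra ℚ_[p]
  set d := E.natDegree with hd
  set G := E.map (PadicInt.Coe.ringHom (p := p)) with hGdef
  have hsplit := aeval_monic_split hm π
  rw [hsplit] at hroot
  have heq : π ^ d = - ∑ i ∈ Finset.range d, G.coeff i • π ^ i :=
    eq_neg_of_add_eq_zero_right hroot
  have hcoeffle : ∀ i, i < d → ‖G.coeff i‖ ≤ (p:ℝ)⁻¹ := fun i hi => coeff_norm_le ⟨hm, hco⟩ hi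
  have hnorm_eq : ‖π‖ ^ d = ‖∑ i ∈ Finset.range d, G.coeff i • π ^ i‖ := by
    rw [← norm_pow, heq, norm_neg]
  have ht1 : ‖π‖ < 1 := by
    by_contra hlt
    push_neg at hlt
    have hb : ‖∑ i ∈ Finset.range d, G.coeff i • π ^ i‖ ≤ (p:ℝ)⁻¹ * ‖π‖ ^ (d-1) := by
      apply IsUltrametricDist.norm_sum_le_of_forall_le_of_nonempty
        (Finset.nonempty_range_iff.2 (by omega))
      intro i hi
      rw [norm_smul, norm_pow]
      exact mul_le_mul (hcoeffle i (Finset.mem_range.mp hi))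
        (pow_le_pow_right₀ hlt (by have := Finset.mem_range.mp hi; omega))
        (pow_nonneg (norm_nonneg _) _) p_inv_pos.le
    have hrw : ‖π‖ ^ d = ‖π‖ * ‖π‖ ^ (d - 1) := by
      rw [← pow_succ']
      congr 1
      omega
    rw [hnorm_eq] at hrw
    have hXpos : (0:ℝ) < ‖π‖ ^ (d-1) := pow_pos (lt_of_lt_of_le one_pos hlt) _
    have : ‖π‖ ≤ (p:ℝ)⁻¹ := by
      have h2 : ‖π‖ * ‖π‖ ^ (d-1) ≤ (p:ℝ)⁻¹ * ‖π‖ ^ (d-1) := hrw ▸ hb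
      exact le_of_mul_le_mul_right h2 hXpos
    linarith [p_inv_lt_one (p := p)]
  -- second step
  have hsum0 : ∑ i ∈ Finset.range d, G.coeff i • π ^ i
      = G.coeff 0 • (1:K) + ∑ i ∈ Finset.Ico 1 d, G.coeff i • π ^ i := by
    rw [Finset.range_eq_Ico, Finset.sum_eq_sum_Ico_succ_bot (by omega : 0 < d)]
    simp
  have hG0 : ‖G.coeff 0 • (1:K)‖ = (p:ℝ)⁻¹ := by
    rw [norm_smul, norm_one, mul_one, hGdef, coeff_map,
      show ((PadicInt.Coe.ringHom (p := p)) (E.coeff 0)) = ((E.coeff 0 : ℤ_[p]) : ℚ_[p]) from rfl,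
      PadicInt.padic_norm_e_of_padicInt, h0]
  have hA : ‖∑ i ∈ Finset.Ico 1 d, G.coeff i • π ^ i‖ < (p:ℝ)⁻¹ := by
    have hle : ‖∑ i ∈ Finset.Ico 1 d, G.coeff i • π ^ i‖ ≤ (p:ℝ)⁻¹ * ‖π‖ := by
      apply IsUltrametricDist.norm_sum_le_of_forall_le_of_nonneg
        (mul_nonneg p_inv_pos.le (norm_nonneg _))
      intro i hi
      obtain ⟨hi1, hi2⟩ := Finset.mem_Ico.mp hi
      rw [norm_smul, norm_pow]
      have hπle : ‖π‖ ^ i ≤ ‖π‖ ^ 1 := pow_le_pow_of_le_one (norm_nonneg _) ht1.le hi1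
      rw [pow_one] at hπle
      exact mul_le_mul (hcoeffle i hi2) hπle (pow_nonneg (norm_nonneg _) _) p_inv_pos.le
    calc ‖∑ i ∈ Finset.Ico 1 d, G.coeff i • π ^ i‖ ≤ (p:ℝ)⁻¹ * ‖π‖ := hle
    _ < (p:ℝ)⁻¹ * 1 := by
        apply mul_lt_mul_of_pos_left ht1 p_inv_pos
    _ = (p:ℝ)⁻¹ := mul_one _
  rw [hnorm_eq, hsum0, add_comm, norm_add_eq_right (by rw [hG0]; exact hA), hG0]


section Cyclo
variable (p : ℕ) [Fact p.Prime]

noncomputable def Epoly (k : ℕ) : Polynomial ℤ_[p] :=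
  (cyclotomic (p^k) ℤ_[p]).comp (X + 1)

theorem Epoly_monic (k : ℕ) : (Epoly p k).Monic := by
  have h := (cyclotomic.monic (p^k) ℤ_[p]).comp_X_add_C (1 : ℤ_[p])
  rw [Epoly]
  exact (by rwa [Polynomial.C_1] at h : ((cyclotomic (p^k) ℤ_[p]).comp (X + 1)).Monic)

theorem Epoly_natDegree (k : ℕ) : (Epoly p k).natDegree = (p^k).totient := by
  rw [Epoly, natDegree_comp, natDegree_cyclotomic,
    show (X + 1 : Polynomial ℤ_[p]) = X + C 1 by rw [Polynomial.C_1], natDegree_X_add_C, mul_one]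

theorem Epoly_zmap (k : ℕ) :
    Epoly p k = ((cyclotomic (p^k) ℤ).comp (X+1)).map (Int.castRingHom ℤ_[p]) := by
  rw [Polynomial.map_comp, map_cyclotomic, Polynomial.map_add, Polynomial.map_X,
    Polynomial.map_one, Epoly]

theorem Epoly_coeff_dvd {k : ℕ} (hk : 1 ≤ k) {i : ℕ} (hi : i < (Epoly p k).natDegree) :
    (p:ℤ_[p]) ∣ (Epoly p k).coeff i := by
  obtain ⟨n, rfl⟩ : ∃ n, k = n + 1 := ⟨k - 1, by omega⟩
  have hE := cyclotomic_prime_pow_comp_X_add_one_isEisensteinAt p n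
  have hdeg : ((cyclotomic (p^(n+1)) ℤ).comp (X+1)).natDegree = (Epoly p (n+1)).natDegree := by
    rw [Epoly_natDegree, natDegree_comp, natDegree_cyclotomic,
      show (X + 1 : Polynomial ℤ) = X + C 1 by rw [Polynomial.C_1], natDegree_X_add_C, mul_one]
  have hmem := hE.mem (show i < _ by rw [hdeg]; exact hi)
  rw [Ideal.submodule_span_eq, Ideal.mem_span_singleton] at hmem
  have := map_dvd (Int.castRingHom ℤ_[p]) hmem
  rw [Epoly_zmap, coeff_map]
  simpa using this

theorem Epoly_coeff_zero {k : ℕ} (hk : 1 ≤ k) : (Epoly p k).coeff 0 = (p:ℤ_[p]) := by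
  obtain ⟨n, rfl⟩ : ∃ n, k = n + 1 := ⟨k - 1, by omega⟩
  rw [Epoly, coeff_zero_eq_eval_zero, eval_comp, eval_add, eval_X, eval_one, zero_add,
    eval_one_cyclotomic_prime_pow]

theorem Epoly_map_Q (k : ℕ) :
    (Epoly p k).map (PadicInt.Coe.ringHom (p := p)) = (cyclotomic (p^k) ℚ_[p]).comp (X+1) := by
  rw [Epoly, Polynomial.map_comp, map_cyclotomic, Polynomial.map_add, Polynomial.map_X,
    Polynomial.map_one]

theorem Epoly_aeval_zero {K : Type*} [NormedField K] [NormedAlgebra ℚ_[p] K] {k : ℕ}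
    {ζ : K} (hζ : IsPrimitiveRoot ζ (p^k)) (hk : 1 ≤ k) :
    aeval (ζ - 1) ((Epoly p k).map (PadicInt.Coe.ringHom (p := p))) = 0 := by
  rw [Epoly_map_Q, aeval_comp]
  have h1 : aeval (ζ - 1) (X + 1 : Polynomial ℚ_[p]) = ζ := by
    rw [map_add, aeval_X, map_one, sub_add_cancel]
  rw [h1, aeval_def, ← eval_map, map_cyclotomic]
  exact hζ.isRoot_cyclotomic (pow_pos (Fact.out : p.Prime).pos k)

theorem EpolyQ_irreducible {k : ℕ} (hk : 1 ≤ k) :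
    Irreducible ((Epoly p k).map (PadicInt.Coe.ringHom (p := p))) := by
  have hmon := Epoly_monic p k
  have halg : (algebraMap ℤ_[p] ℚ_[p]) = PadicInt.Coe.ringHom := rfl
  rw [← halg, ← hmon.irreducible_iff_irreducible_map_fraction_map]
  have hp0 : (p:ℤ_[p]) ≠ 0 := PadicInt.prime_p.ne_zero
  have hdpos : 0 < (Epoly p k).natDegree := by
    rw [Epoly_natDegree]
    exact Nat.totient_pos.2 (pow_pos (Fact.out : p.Prime).pos k)
  apply irreducible_of_eisenstein_criterion (P := Ideal.span {(p:ℤ_[p])})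
  · exact (Ideal.span_singleton_prime hp0).2 PadicInt.prime_p
  · rw [hmon.leadingCoeff, Ideal.mem_span_singleton]
    exact PadicInt.prime_p.not_dvd_one
  · intro n hn
    rw [Ideal.mem_span_singleton]
    refine Epoly_coeff_dvd p hk ?_
    rw [degree_eq_natDegree hmon.ne_zero] at hn
    exact_mod_cast hn
  · rw [degree_eq_natDegree hmon.ne_zero]
    exact_mod_cast hdpos
  · rw [Ideal.span_singleton_pow, Ideal.mem_span_singleton, Epoly_coeff_zero p hk]
    intro hdvd
    have : (p:ℤ_[p]) ∣ 1 := by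
      obtain ⟨c, hc⟩ := hdvd
      have h1 : (1:ℤ_[p]) * p = (p * c) * p := by linear_combination hc
      exact ⟨c, mul_right_cancel₀ hp0 h1⟩
    exact PadicInt.prime_p.not_dvd_one this
  · exact hmon.isPrimitive

end Cyclo


section NormFacts
variable {p : ℕ} [Fact p.Prime]

theorem totient_pos' (k : ℕ) : 0 < ((p:ℕ)^k).totient :=
  Nat.totient_pos.2 (pow_pos (Fact.out : p.Prime).pos k)

variable {K : Type*} [NormedField K] [NormedAlgebra ℚ_[p] K]

theorem norm_zeta_sub_one {k : ℕ} (hk : 1 ≤ k) {ζ : K} (hζ : IsPrimitiveRoot ζ (p^k)) :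
    ‖ζ - 1‖ ^ (p^k).totient = (p:ℝ)⁻¹ := by
  have h := eisenstein_root_norm (Epoly_monic p k)
    (by rw [Epoly_natDegree]; exact totient_pos' k)
    (fun i hi => Epoly_coeff_dvd p hk hi)
    (by rw [Epoly_coeff_zero p hk, PadicInt.norm_p])
    (Epoly_aeval_zero p hζ hk)
  rwa [Epoly_natDegree] at h

theorem zeta_sub_one_pos {k : ℕ} (hk : 1 ≤ k) {ζ : K} (hζ : IsPrimitiveRoot ζ (p^k)) :
    0 < ‖ζ - 1‖ := by
  rcases (norm_nonneg (ζ - 1)).lt_or_eq with h|h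
  · exact h
  · exfalso
    have h2 := norm_zeta_sub_one hk hζ
    rw [← h, zero_pow (totient_pos' (p := p) k).ne'] at h2
    exact absurd h2.symm (ne_of_gt p_inv_pos)

theorem zeta_sub_one_lt_one {k : ℕ} (hk : 1 ≤ k) {ζ : K} (hζ : IsPrimitiveRoot ζ (p^k)) :
    ‖ζ - 1‖ < 1 := by
  by_contra hle
  push_neg at hle
  have h1 : (1:ℝ) ≤ ‖ζ - 1‖ ^ (p^k).totient := by
    calc (1:ℝ) = ‖ζ - 1‖ ^ 0 := (pow_zero _).symm
    _ ≤ _ := pow_le_pow_right₀ hle (Nat.zero_le _)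
  rw [norm_zeta_sub_one hk hζ] at h1
  linarith [p_inv_lt_one (p := p)]

theorem minpoly_pi [FiniteDimensional ℚ_[p] K] {k : ℕ} (hk : 1 ≤ k) {ζ : K}
    (hζ : IsPrimitiveRoot ζ (p^k)) :
    minpoly ℚ_[p] (ζ - 1) = (Epoly p k).map (PadicInt.Coe.ringHom (p := p)) :=
  (minpoly.eq_of_irreducible_of_monic (EpolyQ_irreducible p hk) (Epoly_aeval_zero p hζ hk)
    ((Epoly_monic p k).map _)).symm

end NormFacts

section Equivs
variable {p : ℕ} [Fact p.Prime]

theorem algEquiv_norm_le {F F' : Type*} [NormedField F] [NormedAlgebra ℚ_[p] F]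
    [FiniteDimensional ℚ_[p] F] [NormedField F'] [NormedAlgebra ℚ_[p] F']
    (σ : F ≃ₐ[ℚ_[p]] F') (x : F) : ‖σ x‖ ≤ ‖x‖ := by
  rcases eq_or_ne x 0 with rfl|hx
  · simp
  set T := LinearMap.toContinuousLinearMap (σ.toLinearMap) with hT
  have hTx : ∀ y : F, T y = σ y := fun y => rfl
  have hbound : ∀ n : ℕ, ‖σ x‖ ^ n ≤ ‖T‖ * ‖x‖ ^ n := by
    intro n
    calc ‖σ x‖ ^ n = ‖σ (x ^ n)‖ := by rw [map_pow, norm_pow]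
    _ = ‖T (x ^ n)‖ := by rw [hTx]
    _ ≤ ‖T‖ * ‖x ^ n‖ := T.le_opNorm (x ^ n)
    _ = ‖T‖ * ‖x‖ ^ n := by rw [norm_pow]
  by_contra hgt
  push_neg at hgt
  have hx0 : 0 < ‖x‖ := norm_pos_iff.2 hx
  have hr : 1 < ‖σ x‖ / ‖x‖ := (one_lt_div hx0).2 hgt
  obtain ⟨n, hn⟩ := pow_unbounded_of_one_lt ‖T‖ hr
  rw [div_pow] at hn
  have h2 : ‖σ x‖ ^ n / ‖x‖ ^ n ≤ ‖T‖ := (div_le_iff₀ (pow_pos hx0 n)).2 (hbound n)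
  linarith

theorem algEquiv_norm_eq {F F' : Type*} [NormedField F] [NormedAlgebra ℚ_[p] F]
    [FiniteDimensional ℚ_[p] F] [NormedField F'] [NormedAlgebra ℚ_[p] F']
    [FiniteDimensional ℚ_[p] F'] (σ : F ≃ₐ[ℚ_[p]] F') (x : F) : ‖σ x‖ = ‖x‖ := by
  refine le_antisymm (algEquiv_norm_le σ x) ?_
  have := algEquiv_norm_le σ.symm (σ x)
  simpa using this

noncomputable def subNA {K : Type*} [NormedField K] [NormedAlgebra ℚ_[p] K]
    (F : IntermediateField ℚ_[p] K) : NormedAlgebra ℚ_[p] F :=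
  { (inferInstance : Algebra ℚ_[p] F) with
    norm_smul_le := fun c z => by
      show ‖((c • z : F) : K)‖ ≤ _
      rw [show ((c • z : F) : K) = c • (z : K) from rfl, norm_smul]
      exact le_rfl }

end Equivs


section Conj
variable {p : ℕ} [Fact p.Prime]

theorem conj_aeval_norm_eq {K K' : Type*} [NormedField K] [NormedAlgebra ℚ_[p] K]
    [FiniteDimensional ℚ_[p] K] [NormedField K'] [NormedAlgebra ℚ_[p] K']
    [FiniteDimensional ℚ_[p] K'] {k : ℕ} (hk : 1 ≤ k)
    {ζ : K} {ζ' : K'} (hζ : IsPrimitiveRoot ζ (p^k)) (hζ' : IsPrimitiveRoot ζ' (p^k))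
    (q : Polynomial ℚ_[p]) :
    ‖aeval (ζ - 1) q‖ = ‖aeval (ζ' - 1) q‖ := by
  have hint : IsIntegral ℚ_[p] (ζ - 1) := IsIntegral.of_finite _ _
  have hint' : IsIntegral ℚ_[p] (ζ' - 1) := IsIntegral.of_finite _ _
  haveI := IntermediateField.adjoin.finiteDimensional hint
  haveI := IntermediateField.adjoin.finiteDimensional hint'
  letI : NormedAlgebra ℚ_[p] (ℚ_[p]⟮ζ - 1⟯) := subNA _
  letI : NormedAlgebra ℚ_[p] (ℚ_[p]⟮ζ' - 1⟯) := subNA _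
  set B := IntermediateField.adjoin.powerBasis hint with hB
  set B' := IntermediateField.adjoin.powerBasis hint' with hB'
  have hmp : minpoly ℚ_[p] B.gen = minpoly ℚ_[p] B'.gen := by
    rw [hB, hB', IntermediateField.adjoin.powerBasis_gen, IntermediateField.adjoin.powerBasis_gen,
      IntermediateField.minpoly_gen, IntermediateField.minpoly_gen, minpoly_pi hk hζ,
      minpoly_pi hk hζ']
  set σ := B.equivOfMinpoly B' hmp with hσ
  have hval : aeval (ζ - 1) q = ((aeval B.gen q : ℚ_[p]⟮ζ - 1⟯) : K) := by
    exact aeval_algHom_apply (ℚ_[p]⟮ζ - 1⟯).val B.gen q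
  have hval' : aeval (ζ' - 1) q = ((aeval B'.gen q : ℚ_[p]⟮ζ' - 1⟯) : K') := by
    exact aeval_algHom_apply (ℚ_[p]⟮ζ' - 1⟯).val B'.gen q
  have hmid : σ (aeval B.gen q) = aeval B'.gen q := by
    rw [hσ, ← aeval_algHom_apply, PowerBasis.equivOfMinpoly_gen]
  calc ‖aeval (ζ - 1) q‖ = ‖aeval B.gen q‖ := by rw [hval]; rfl
  _ = ‖σ (aeval B.gen q)‖ := by
    exact (@algEquiv_norm_eq p _ _ _ _ _ (IntermediateField.adjoin.finiteDimensional hint) _ _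
      (IntermediateField.adjoin.finiteDimensional hint') σ _).symm
  _ = ‖aeval B'.gen q‖ := by rw [hmid]
  _ = ‖aeval (ζ' - 1) q‖ := by rw [hval']; rfl

end Conj


section ValueGroup
variable {p : ℕ} [Fact p.Prime]

theorem exists_norm_pow_zpow {K : Type*} [NormedField K] [NormedAlgebra ℚ_[p] K]
    [FiniteDimensional ℚ_[p] K] {k : ℕ} (hk : 1 ≤ k) {ζ : K} (hζ : IsPrimitiveRoot ζ (p^k))
    (q : Polynomial ℚ_[p]) (hx0 : aeval (ζ - 1) q ≠ 0) :
    ∃ a : ℤ, ‖aeval (ζ - 1) q‖ ^ ((p:ℕ)^k).totient = (p:ℝ) ^ a := by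
  classical
  haveI : IsUltrametricDist K := IsUltrametricDist.of_normedAlgebra ℚ_[p]
  have hint : IsIntegral ℚ_[p] (ζ - 1) := IsIntegral.of_finite _ _
  haveI := IntermediateField.adjoin.finiteDimensional hint
  set d := ((p:ℕ)^k).totient with hddef
  have hd0 : d ≠ 0 := (totient_pos' (p := p) k).ne'
  have hπpow : ‖ζ - 1‖ ^ d = (p:ℝ)⁻¹ := norm_zeta_sub_one hk hζ
  have hπpos : 0 < ‖ζ - 1‖ := zeta_sub_one_pos hk hζ
  set B := IntermediateField.adjoin.powerBasis hint with hB
  have hdim : B.dim = d := by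
    rw [hB, IntermediateField.adjoin.powerBasis_dim, minpoly_pi hk hζ,
      (Epoly_monic p k).natDegree_map, Epoly_natDegree]
  set xF : ℚ_[p]⟮ζ - 1⟯ := aeval (IntermediateField.AdjoinSimple.gen ℚ_[p] (ζ - 1)) q with hxF
  have hxval : ((xF : ℚ_[p]⟮ζ - 1⟯) : K) = aeval (ζ - 1) q :=
    (aeval_algHom_apply (ℚ_[p]⟮ζ - 1⟯).val _ q).symm
  set b : Fin B.dim → ℚ_[p] := fun i => B.basis.repr xF i with hb
  set f : Fin B.dim → K := fun i => b i • (ζ - 1) ^ (i:ℕ) with hf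
  have hsum : aeval (ζ - 1) q = ∑ i : Fin B.dim, f i := by
    have h1 : (ℚ_[p]⟮ζ - 1⟯).val (∑ i : Fin B.dim, B.basis.repr xF i • B.basis i)
        = ∑ i : Fin B.dim, f i := by
      rw [map_sum]
      refine Finset.sum_congr rfl (fun i _ => ?_)
      show ((B.basis.repr xF i • B.basis i : ℚ_[p]⟮ζ - 1⟯) : K) = b i • (ζ - 1) ^ (i:ℕ)
      rw [show ((B.basis.repr xF i • B.basis i : ℚ_[p]⟮ζ - 1⟯) : K)
          = B.basis.repr xF i • ((B.basis i : ℚ_[p]⟮ζ - 1⟯) : K) from rfl]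
      congr 1
      rw [PowerBasis.coe_basis]
      rw [show (((B.gen ^ (i:ℕ) : ℚ_[p]⟮ζ - 1⟯)) : K) = ((B.gen : K)) ^ (i:ℕ) from
        SubmonoidClass.coe_pow _ _]
      rfl
    rw [← hxval, ← B.basis.sum_repr xF]
    exact h1
  have hterm : ∀ i : Fin B.dim, b i ≠ 0 →
      ‖f i‖ ^ d = (p:ℝ) ^ (-(b i).valuation * d - (i:ℕ) : ℤ) := by
    intro i hbne
    rw [hf, norm_smul, norm_pow, mul_pow, ← pow_mul, mul_comm (i:ℕ) d, pow_mul, hπpow,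
      Padic.norm_eq_zpow_neg_valuation hbne,
      ← zpow_natCast ((p:ℝ) ^ (-(b i).valuation)) d, ← zpow_mul, ← zpow_neg_one (p:ℝ),
      ← zpow_natCast ((p:ℝ) ^ (-1:ℤ)) (i:ℕ), ← zpow_mul, ← zpow_add₀ (ne_of_gt (p_pos (p := p)))]
    congr 1
    ring
  set s : Finset (Fin B.dim) := Finset.univ.filter (fun i => f i ≠ 0) with hs
  have hxs : aeval (ζ - 1) q = ∑ i ∈ s, f i := by
    rw [hsum, hs, Finset.sum_filter_ne_zero]
  have hs_ne : s.Nonempty := by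
    by_contra h
    rw [Finset.not_nonempty_iff_eq_empty] at h
    rw [h, Finset.sum_empty] at hxs
    exact hx0 hxs
  have hbne : ∀ i ∈ s, b i ≠ 0 := by
    intro i hi hbi
    exact (Finset.mem_filter.mp hi).2 (by rw [hf]; simp [hbi])
  have hp_ne_one : (p:ℝ) ≠ 1 := ne_of_gt (by exact_mod_cast (Fact.out : p.Prime).one_lt)
  have hinj : ∀ i ∈ s, ∀ j ∈ s, i ≠ j → ‖f i‖ ≠ ‖f j‖ := by
    intro i hi j hj hij heq
    have h1 := hterm i (hbne i hi)
    have h2 := hterm j (hbne j hj)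
    rw [heq, h2] at h1
    have he := zpow_right_injective₀ (p_pos (p := p)) hp_ne_one h1
    have hd2 : ((i:ℕ):ℤ) - ((j:ℕ):ℤ) = ((b j).valuation - (b i).valuation) * d := by
      linear_combination he
    have hi_lt : (i:ℕ) < d := hdim ▸ i.isLt
    have hj_lt : (j:ℕ) < d := hdim ▸ j.isLt
    rcases eq_or_ne ((b i).valuation) ((b j).valuation) with hv|hv
    · refine hij (Fin.ext ?_)
      rw [hv] at hd2
      have : ((i:ℕ):ℤ) = ((j:ℕ):ℤ) := by
        have h5 : ((i:ℕ):ℤ) - ((j:ℕ):ℤ) = 0 := by rw [hd2]; ring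
        linarith
      exact_mod_cast this
    · have habs : (d:ℤ) ≤ |((i:ℕ):ℤ) - ((j:ℕ):ℤ)| := by
        rw [hd2, abs_mul]
        have h3 : (1:ℤ) ≤ |(b j).valuation - (b i).valuation| := Int.one_le_abs (sub_ne_zero.2 (Ne.symm hv))
        have h4 : |(d:ℤ)| = (d:ℤ) := abs_of_nonneg (by positivity)
        calc (d:ℤ) = 1 * d := (one_mul _).symm
        _ ≤ |(b j).valuation - (b i).valuation| * |(d:ℤ)| := by
            rw [h4]; exact mul_le_mul_of_nonneg_right h3 (by positivity)
      have hlt : |((i:ℕ):ℤ) - ((j:ℕ):ℤ)| < (d:ℤ) := by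
        rw [abs_sub_lt_iff]
        omega
      linarith
  obtain ⟨i, hi, hnorm⟩ := exists_norm_sum_eq hs_ne f hinj
  refine ⟨-(b i).valuation * d - (i:ℕ), ?_⟩
  rw [hxs, hnorm]
  exact hterm i (hbne i hi)

end ValueGroup


section Levels
variable {p : ℕ} [Fact p.Prime]

theorem lam_lt_totient {lam k : ℕ} (hk : lam + 1 ≤ k) : lam < ((p:ℕ)^k).totient := by
  have h1 : ((p:ℕ)^k).totient = p^(k-1) * (p-1) := Nat.totient_prime_pow Fact.out (by omega)
  have h2 : 2^(k-1) ≤ p^(k-1) := Nat.pow_le_pow_left (Fact.out : p.Prime).two_le _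
  have h3 : k - 1 < 2^(k-1) := Nat.lt_two_pow_self
  have h4 : 1 ≤ p - 1 := by have := (Fact.out : p.Prime).two_le; omega
  have h5 : p^(k-1) ≤ p^(k-1) * (p-1) := Nat.le_mul_of_pos_right _ (by omega)
  omega

variable {K : Type*} [NormedField K] [NormedAlgebra ℚ_[p] K]

theorem eval_norm_high {g : Polynomial ℤ_[p]} (hg : IsDistinguished p g) {k : ℕ} (hk : 1 ≤ k)
    (hlam : g.natDegree < ((p:ℕ)^k).totient) {ζ : K} (hζ : IsPrimitiveRoot ζ (p^k)) :
    ‖Polynomial.evalPadic p g (ζ - 1)‖ = ‖ζ - 1‖ ^ g.natDegree := by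
  haveI : IsUltrametricDist K := IsUltrametricDist.of_normedAlgebra ℚ_[p]
  have ht1 := zeta_sub_one_lt_one hk hζ
  have ht0 := zeta_sub_one_pos hk hζ
  have hlow : (p:ℝ)⁻¹ < ‖ζ - 1‖ ^ g.natDegree := by
    rw [← norm_zeta_sub_one hk hζ]
    exact pow_lt_pow_right_of_lt_one₀ ht0 ht1 hlam
  have hS : ‖∑ i ∈ Finset.range g.natDegree,
      (g.map (PadicInt.Coe.ringHom (p := p))).coeff i • (ζ - 1) ^ i‖ < ‖(ζ - 1) ^ g.natDegree‖ := by
    rw [norm_pow]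
    refine lt_of_le_of_lt ?_ hlow
    apply IsUltrametricDist.norm_sum_le_of_forall_le_of_nonneg p_inv_pos.le
    intro i hi
    rw [norm_smul, norm_pow]
    calc ‖(g.map (PadicInt.Coe.ringHom (p := p))).coeff i‖ * ‖ζ - 1‖ ^ i
        ≤ (p:ℝ)⁻¹ * 1 := mul_le_mul (coeff_norm_le hg (Finset.mem_range.mp hi))
          (by first
            | exact pow_le_one₀ ht0.le ht1.le
            | exact pow_le_one _ ht0.le ht1.le) (pow_nonneg (norm_nonneg _) _) p_inv_pos.le
    _ = (p:ℝ)⁻¹ := mul_one _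
  rw [Polynomial.evalPadic, ← Polynomial.map_map, Polynomial.eval_map, ← Polynomial.aeval_def,
    aeval_monic_split hg.1, norm_add_eq_right hS, norm_pow]

theorem level_high {g : Polynomial ℤ_[p]} (hg : IsDistinguished p g) {lam k : ℕ}
    (hdeg : g.natDegree = lam) (hk : 1 ≤ k) (hlam : lam < ((p:ℕ)^k).totient)
    {ξ : K} (hξ : IsPrimitiveRoot ξ (p^k)) :
    ∏ ζ ∈ primitiveRoots (p^k) K, ‖Polynomial.evalPadic p g (ζ - 1)‖ = ((p:ℝ)⁻¹) ^ lam := by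
  have hpos : 0 < (p:ℕ)^k := pow_pos (Fact.out : p.Prime).pos k
  have h1 : ∀ ζ ∈ primitiveRoots (p^k) K,
      ‖Polynomial.evalPadic p g (ζ - 1)‖ = ‖ζ - 1‖ ^ lam := by
    intro ζ hm
    rw [← hdeg]
    exact eval_norm_high hg hk (hdeg ▸ hlam) ((mem_primitiveRoots hpos).1 hm)
  rw [Finset.prod_congr rfl h1, Finset.prod_pow]
  congr 1
  refine pow_inj_nonneg (Finset.prod_nonneg fun _ _ => norm_nonneg _) p_inv_pos.le
    (totient_pos' (p := p) k).ne' ?_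
  rw [← Finset.prod_pow,
    Finset.prod_congr rfl (fun ζ hm => norm_zeta_sub_one hk ((mem_primitiveRoots hpos).1 hm)),
    Finset.prod_const, hξ.card_primitiveRoots]

variable [FiniteDimensional ℚ_[p] K]

theorem level_eq {K' : Type*} [NormedField K'] [NormedAlgebra ℚ_[p] K']
    [FiniteDimensional ℚ_[p] K'] {k : ℕ} (hk : 1 ≤ k) {ξ : K} {ξ' : K'}
    (hξ : IsPrimitiveRoot ξ (p^k)) (hξ' : IsPrimitiveRoot ξ' (p^k)) (g : Polynomial ℤ_[p]) :
    ∏ ζ ∈ primitiveRoots (p^k) K, ‖Polynomial.evalPadic p g (ζ - 1)‖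
      = ∏ ζ ∈ primitiveRoots (p^k) K', ‖Polynomial.evalPadic p g (ζ - 1)‖ := by
  have hpos : 0 < (p:ℕ)^k := pow_pos (Fact.out : p.Prime).pos k
  have h1 : ∀ ζ ∈ primitiveRoots (p^k) K,
      ‖Polynomial.evalPadic p g (ζ - 1)‖ = ‖Polynomial.evalPadic p g (ξ' - 1)‖ := by
    intro ζ hm
    rw [evalPadic_eq_aeval, evalPadic_eq_aeval]
    exact conj_aeval_norm_eq hk ((mem_primitiveRoots hpos).1 hm) hξ' _
  have h2 : ∀ ζ ∈ primitiveRoots (p^k) K',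
      ‖Polynomial.evalPadic p g (ζ - 1)‖ = ‖Polynomial.evalPadic p g (ξ' - 1)‖ := by
    intro ζ hm
    rw [evalPadic_eq_aeval, evalPadic_eq_aeval]
    exact conj_aeval_norm_eq hk ((mem_primitiveRoots hpos).1 hm) hξ' _
  rw [Finset.prod_congr rfl h1, Finset.prod_congr rfl h2, Finset.prod_const, Finset.prod_const,
    hξ.card_primitiveRoots, hξ'.card_primitiveRoots]

theorem level_int {k : ℕ} (hk : 1 ≤ k) {ξ : K} (hξ : IsPrimitiveRoot ξ (p^k))
    (g : Polynomial ℤ_[p]) (h0 : Polynomial.evalPadic p g (ξ - 1) ≠ 0) :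
    ∃ a : ℤ, ∏ ζ ∈ primitiveRoots (p^k) K, ‖Polynomial.evalPadic p g (ζ - 1)‖ = (p:ℝ) ^ a := by
  have hpos : 0 < (p:ℕ)^k := pow_pos (Fact.out : p.Prime).pos k
  have heq : ∏ ζ ∈ primitiveRoots (p^k) K, ‖Polynomial.evalPadic p g (ζ - 1)‖
      = ‖Polynomial.evalPadic p g (ξ - 1)‖ ^ ((p:ℕ)^k).totient := by
    have h1 : ∀ ζ ∈ primitiveRoots (p^k) K,
        ‖Polynomial.evalPadic p g (ζ - 1)‖ = ‖Polynomial.evalPadic p g (ξ - 1)‖ := by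
      intro ζ hm
      rw [evalPadic_eq_aeval, evalPadic_eq_aeval]
      exact conj_aeval_norm_eq hk ((mem_primitiveRoots hpos).1 hm) hξ _
    rw [Finset.prod_congr rfl h1, Finset.prod_const, hξ.card_primitiveRoots]
  obtain ⟨a, ha⟩ := exists_norm_pow_zpow hk hξ (g.map (PadicInt.Coe.ringHom (p := p)))
    (by rwa [← evalPadic_eq_aeval])
  refine ⟨a, ?_⟩
  rw [heq, evalPadic_eq_aeval]
  exact ha

end Levels

section Partition
variable {p : ℕ} [Fact p.Prime]

theorem nthRoots_erase_eq {K : Type*} [NormedField K] [DecidableEq K] {m : ℕ} (hm : 1 ≤ m)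
    {ζ₀ : K} (hζ₀ : IsPrimitiveRoot ζ₀ (p^m)) :
    (Polynomial.nthRoots (p^m) (1:K)).toFinset.erase 1
      = (Finset.Ioc 0 m).biUnion (fun k => primitiveRoots (p^k) K) := by
  have ppos := (Fact.out : p.Prime).pos
  ext x
  simp only [Finset.mem_erase, Multiset.mem_toFinset, Finset.mem_biUnion, Finset.mem_Ioc]
  constructor
  · rintro ⟨hx1, hxn⟩
    rw [Polynomial.mem_nthRoots (pow_pos ppos m)] at hxn
    have hord : orderOf x ∣ p^m := orderOf_dvd_of_pow_eq_one hxn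
    obtain ⟨k, hk, hko⟩ := (Nat.dvd_prime_pow (Fact.out : p.Prime)).1 hord
    have hk0 : 0 < k := by
      rcases Nat.eq_zero_or_pos k with rfl|h
      · rw [pow_zero] at hko
        exact absurd (orderOf_eq_one_iff.1 hko) hx1
      · exact h
    refine ⟨k, ⟨hk0, hk⟩, ?_⟩
    rw [mem_primitiveRoots (pow_pos ppos k)]
    exact hko ▸ IsPrimitiveRoot.orderOf x
  · rintro ⟨k, ⟨hk0, hk⟩, hxk⟩
    rw [mem_primitiveRoots (pow_pos ppos k)] at hxk
    have hone : (1:ℕ) < p ^ k := Nat.one_lt_pow hk0.ne' (Fact.out : p.Prime).one_lt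
    constructor
    · intro h1
      rw [h1] at hxk
      have := hxk.unique IsPrimitiveRoot.one
      omega
    · rw [Polynomial.mem_nthRoots (pow_pos ppos m)]
      rw [show p^m = p^k * p^(m-k) from by rw [← pow_add, Nat.add_sub_cancel' hk], pow_mul,
        hxk.pow_eq_one, one_pow]

theorem primroots_pairwise {K : Type*} [NormedField K] {m : ℕ} :
    (↑(Finset.Ioc 0 m) : Set ℕ).PairwiseDisjoint (fun k => primitiveRoots ((p:ℕ)^k) K) := by
  intro a ha b hb hab
  have ha0 : 0 < a := (Finset.mem_Ioc.mp (by exact_mod_cast ha)).1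
  have hb0 : 0 < b := (Finset.mem_Ioc.mp (by exact_mod_cast hb)).1
  refine Finset.disjoint_left.2 (fun x hxa hxb => hab ?_)
  have h1 := (mem_primitiveRoots (pow_pos (Fact.out : p.Prime).pos a)).1 hxa
  have h2 := (mem_primitiveRoots (pow_pos (Fact.out : p.Prime).pos b)).1 hxb
  exact Nat.pow_right_injective (Fact.out : p.Prime).two_le (h1.unique h2)

theorem prod_exists_zpow {ι : Type*} (s : Finset ι) (f : ι → ℝ)
    (h : ∀ i ∈ s, ∃ a : ℤ, f i = (p:ℝ)^a) :
    ∃ A : ℤ, ∏ i ∈ s, f i = (p:ℝ)^A := by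
  classical
  induction s using Finset.induction_on with
  | empty => exact ⟨0, by simp⟩
  | @insert c t hc IH =>
      obtain ⟨A, hA⟩ := IH (fun i hi => h i (Finset.mem_insert_of_mem hi))
      obtain ⟨a, ha⟩ := h c (Finset.mem_insert_self _ _)
      exact ⟨a + A, by rw [Finset.prod_insert hc, hA, ha, zpow_add₀ (ne_of_gt (p_pos (p := p)))]⟩

end Partition

structure BigWitness (p lam : ℕ) [Fact p.Prime] : Type 1 where
  m : ℕ
  K : Type
  [nf : NormedField K]
  [na : NormedAlgebra ℚ_[p] K]
  [fd : FiniteDimensional ℚ_[p] K]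
  ζ : K
  hm : lam + 1 ≤ m
  hζ : IsPrimitiveRoot ζ (p ^ m)

attribute [instance] BigWitness.nf BigWitness.na BigWitness.fd

end IwasawaProofAux

/-- If `g ∈ ℤ_p[X]` is a distinguished polynomial of degree `λ` with `g(ζ - 1) ≠ 0` for
every `p`-power root of unity `ζ ≠ 1`, then there is an integer `C`, independent of `m`,
such that for all sufficiently large `m`,
`ord_p (∏_{ζ^{p^m} = 1, ζ ≠ 1} g(ζ - 1)) = λ·m + C`, the product being taken over all
`p^m`-th roots of unity `ζ ≠ 1` in `ℚ_p(ζ_{p^m})`. -/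
theorem ordp_prod_distinguished_eval (p : ℕ) [Fact p.Prime] (g : Polynomial ℤ_[p])
    (lam : ℕ) (hg : IsDistinguished p g) (hdeg : g.natDegree = lam)
    (hne : ∀ (K : Type) [NormedField K] [NormedAlgebra ℚ_[p] K] [FiniteDimensional ℚ_[p] K]
      (l : ℕ), 1 ≤ l → ∀ ζ : K, IsPrimitiveRoot ζ (p ^ l) →
        Polynomial.evalPadic p g (ζ - 1) ≠ 0) :
    ∃ C : ℤ, ∃ m₀ : ℕ, ∀ m, m₀ ≤ m →
      ∀ (K : Type) [NormedField K] [NormedAlgebra ℚ_[p] K] [FiniteDimensional ℚ_[p] K]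
        [DecidableEq K] (ζ₀ : K), IsPrimitiveRoot ζ₀ (p ^ m) →
          Algebra.adjoin ℚ_[p] {ζ₀} = ⊤ →
          ordp p (∏ ζ ∈ ((Polynomial.nthRoots (p ^ m) (1 : K)).toFinset.erase 1),
              Polynomial.evalPadic p g (ζ - 1))
            = (lam : ℝ) * m + C := by
  classical
  by_cases hW : Nonempty (IwasawaProofAux.BigWitness p lam)
  case neg =>
    exact ⟨0, lam + 1, fun m hm K _ _ _ _ ζ₀ hζ₀ _ =>
      absurd ⟨⟨m, K, ζ₀, hm, hζ₀⟩⟩ hW⟩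
  case pos =>
  have ppos : 0 < (p:ℕ) := (Fact.out : p.Prime).pos
  set W := hW.some with hWdef
  have hWm : lam + 1 ≤ W.m := W.hm
  have hWprim : ∀ k, 1 ≤ k → k ≤ lam → IsPrimitiveRoot (W.ζ ^ (p ^ (W.m - k))) (p ^ k) := by
    intro k hk1 hk2
    exact W.hζ.pow (pow_pos ppos W.m)
      (by rw [← pow_add, Nat.sub_add_cancel (by omega : k ≤ W.m)])
  have hlowW : ∃ A : ℤ, ∏ k ∈ Finset.Ioc 0 lam,
      (∏ ζ ∈ primitiveRoots (p^k) W.K, ‖Polynomial.evalPadic p g (ζ - 1)‖) = (p:ℝ) ^ A := by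
    apply IwasawaProofAux.prod_exists_zpow
    intro k hk
    obtain ⟨hk0, hk2⟩ := Finset.mem_Ioc.mp hk
    exact IwasawaProofAux.level_int hk0 (hWprim k hk0 hk2) g
      (hne W.K k hk0 _ (hWprim k hk0 hk2))
  obtain ⟨A, hA⟩ := hlowW
  refine ⟨-A - (lam:ℤ)^2, lam + 1, ?_⟩
  intro m hm K _ _ _ _ ζ₀ hζ₀ _
  haveI : IsUltrametricDist K := IsUltrametricDist.of_normedAlgebra ℚ_[p]
  have hm1 : 1 ≤ m := by omega
  have hprim : ∀ k, 1 ≤ k → k ≤ m → IsPrimitiveRoot (ζ₀ ^ (p ^ (m - k))) (p ^ k) := by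
    intro k hk1 hk2
    exact hζ₀.pow (pow_pos ppos m) (by rw [← pow_add, Nat.sub_add_cancel hk2])
  rw [ordp, IwasawaProofAux.nthRoots_erase_eq hm1 hζ₀,
    Finset.prod_biUnion (IwasawaProofAux.primroots_pairwise), norm_prod]
  have hnormlev : ∀ k ∈ Finset.Ioc 0 m,
      ‖∏ ζ ∈ primitiveRoots (p^k) K, Polynomial.evalPadic p g (ζ - 1)‖
        = ∏ ζ ∈ primitiveRoots (p^k) K, ‖Polynomial.evalPadic p g (ζ - 1)‖ :=
    fun k _ => norm_prod _ _
  rw [Finset.prod_congr rfl hnormlev,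
    ← Finset.prod_Ioc_consecutive _ (Nat.zero_le lam) (by omega : lam ≤ m)]
  have hlow_eq : ∏ k ∈ Finset.Ioc 0 lam,
      (∏ ζ ∈ primitiveRoots (p^k) K, ‖Polynomial.evalPadic p g (ζ - 1)‖) = (p:ℝ)^A := by
    rw [← hA]
    refine Finset.prod_congr rfl (fun k hk => ?_)
    obtain ⟨hk0, hk2⟩ := Finset.mem_Ioc.mp hk
    exact IwasawaProofAux.level_eq hk0 (hprim k hk0 (by omega)) (hWprim k hk0 hk2) g
  have hhigh : ∏ k ∈ Finset.Ioc lam m,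
      (∏ ζ ∈ primitiveRoots (p^k) K, ‖Polynomial.evalPadic p g (ζ - 1)‖)
        = ((p:ℝ)⁻¹) ^ (lam * (m - lam)) := by
    have h1 : ∀ k ∈ Finset.Ioc lam m,
        (∏ ζ ∈ primitiveRoots (p^k) K, ‖Polynomial.evalPadic p g (ζ - 1)‖)
          = ((p:ℝ)⁻¹) ^ lam := by
      intro k hk
      obtain ⟨hk1, hk2⟩ := Finset.mem_Ioc.mp hk
      exact IwasawaProofAux.level_high hg hdeg (by omega)
        (IwasawaProofAux.lam_lt_totient (by omega)) (hprim k (by omega) hk2)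
    rw [Finset.prod_congr rfl h1, Finset.prod_const, Nat.card_Ioc, ← pow_mul]
  rw [hlow_eq, hhigh]
  have hp0 : (p:ℝ) ≠ 0 := ne_of_gt (IwasawaProofAux.p_pos (p := p))
  have hp1 : (p:ℝ) ≠ 1 := by
    have : (1:ℝ) < (p:ℝ) := by exact_mod_cast (Fact.out : p.Prime).one_lt
    exact this.ne'
  have hz : (p:ℝ)^A * ((p:ℝ)⁻¹)^(lam * (m - lam))
      = (p:ℝ) ^ ((A - (lam * (m - lam) : ℕ) : ℤ) : ℝ) := by
    rw [Real.rpow_intCast, inv_pow, ← zpow_natCast (p:ℝ) (lam * (m - lam)), ← zpow_neg,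
      ← zpow_add₀ hp0, sub_eq_add_neg]
  rw [hz, Real.logb_rpow (IwasawaProofAux.p_pos (p := p)) hp1]
  have hmlam : lam ≤ m := by omega
  push_cast [Nat.cast_sub hmlam]
  ring
end
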